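/- Let 1 → A → G → Q → 1 be a short exact sequence of groups with A abelian, Q finite of order n, and suppose multiplication by n is an automorphism of A. Then for every subgroup H of Q, the induced extension of H by A splits; in particular the original extension splits. -/

import Mathlib

open Finset

private lemma pow_bij_of_dvd {A : Type*} [CommGroup A] {n m : ℕ} (hmn : m ∣ n)
    (h : Function.Bijective (fun a : A => a ^ n)) :
    Function.Bijective (fun a : A => a ^ m) := by
  obtain ⟨k, rfl⟩ := hmn
  constructor
  · intro a b hab
    have : (fun a : A => a ^ (m * k)) a = (fun a : A => a ^ (m * k)) b := by
      simp only [pow_mul]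
      simp only at hab
      rw [hab]
    exact h.1 this
  · intro b
    obtain ⟨a, ha⟩ := h.2 b
    exact ⟨a ^ k, by simpa [pow_mul, mul_comm m k, pow_right_comm] using ha⟩

private lemma split_aux {G : Type*} [Group G] (A : Subgroup G) [A.Normal]
    (hA : ∀ a b : A, a * b = b * a) [Finite (G ⧸ A)]
    (h : Function.Bijective (fun a : A => a ^ Nat.card (G ⧸ A)))
    (H : Subgroup (G ⧸ A)) :
    ∃ s : H →* G, ∀ x : H, QuotientGroup.mk (s x) = (x : G ⧸ A) := by
  letI : CommGroup A := { (inferInstance : Group A) with mul_comm := hA }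
  haveI : Fintype H := Fintype.ofFinite H
  set m : ℕ := Nat.card H with hm
  have hmdvd : m ∣ Nat.card (G ⧸ A) := Subgroup.card_subgroup_dvd_card H
  have hbm : Function.Bijective (fun a : A => a ^ m) := pow_bij_of_dvd hmdvd h
  set em : A ≃ A := Equiv.ofBijective _ hbm with hem
  -- section
  set t : (G ⧸ A) → G := fun q => q.out with htdef
  have ht : ∀ q : G ⧸ A, QuotientGroup.mk (t q) = q := fun q => QuotientGroup.out_eq' q
  -- cocycle
  have hcmem : ∀ x y : H, t ↑x * t ↑y * (t ↑(x * y))⁻¹ ∈ A := by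
    intro x y
    rw [← QuotientGroup.eq_one_iff]
    simp only [QuotientGroup.mk_mul, QuotientGroup.mk_inv, ht]
    push_cast
    group
  set c : H → H → A := fun x y => ⟨t ↑x * t ↑y * (t ↑(x * y))⁻¹, hcmem x y⟩ with hcdef
  have hc_spec : ∀ x y : H, (c x y : G) * t ↑(x * y) = t ↑x * t ↑y := by
    intro x y; simp [hcdef]
  set act : G → A → A := fun g a => MulAut.conjNormal g a with hactdef
  have hact : ∀ (g : G) (a : A), ((act g a : A) : G) = g * a * g⁻¹ := fun g a =>
    MulAut.conjNormal_apply g a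
  -- cocycle identity
  have hcoc : ∀ x y z : H, c x y * c (x * y) z = act (t ↑x) (c y z) * c x (y * z) := by
    intro x y z
    ext
    push_cast [hcdef, hact]
    rw [mul_assoc (x : G ⧸ A) (y : G ⧸ A) (z : G ⧸ A)]
    group
  set e : H → A := fun x => ∏ z : H, c x z with hedef
  have hkey : ∀ x y : H, (c x y) ^ m * e (x * y) = act (t ↑x) (e y) * e x := by
    intro x y
    have h1 : (c x y) ^ m * e (x * y) = ∏ z : H, (c x y * c (x * y) z) := by
      rw [Finset.prod_mul_distrib, Finset.prod_const, Finset.card_univ, hedef]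
      congr 1
      rw [hm, Nat.card_eq_fintype_card]
    rw [h1]
    have h2 : ∀ z : H, c x y * c (x * y) z = act (t ↑x) (c y z) * c x (y * z) := hcoc x y
    rw [Finset.prod_congr rfl (fun z _ => h2 z), Finset.prod_mul_distrib]
    congr 1
    · rw [hedef]
      exact (map_prod (MulAut.conjNormal (t ↑x)) _ _).symm
    · rw [hedef]
      exact Fintype.prod_equiv (Equiv.mulLeft y) _ _ (fun z => rfl)
  set a : H → A := fun x => em.symm (e x)⁻¹ with hadef
  have ham : ∀ x : H, (a x) ^ m = (e x)⁻¹ := by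
    intro x
    have := em.apply_symm_apply (e x)⁻¹
    rwa [hem, Equiv.ofBijective_apply] at this
  -- the relation in A
  have hrel : ∀ x y : H, a (x * y) = a x * act (t ↑x) (a y) * c x y := by
    intro x y
    apply hbm.1
    show a (x * y) ^ m = (a x * act (t ↑x) (a y) * c x y) ^ m
    rw [mul_pow, mul_pow, ham, ham]
    have : (act (t ↑x) (a y)) ^ m = act (t ↑x) ((a y) ^ m) :=
      (map_pow (MulAut.conjNormal (t ↑x)) (a y) m).symm
    rw [this, ham]
    have hk := hkey x y
    have : (c x y) ^ m = act (t ↑x) (e y) * e x * (e (x * y))⁻¹ := by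
      rw [← hk]; group
    rw [this]
    have hinv : act (t ↑x) (e y)⁻¹ = (act (t ↑x) (e y))⁻¹ :=
      map_inv (MulAut.conjNormal (t ↑x)) (e y)
    rw [hinv]
    group
  set s0 : H → G := fun x => ↑(a x) * t ↑x with hs0
  have hmul : ∀ x y : H, s0 (x * y) = s0 x * s0 y := by
    intro x y
    show ↑(a (x * y)) * t ↑(x * y) = (↑(a x) * t ↑x) * (↑(a y) * t ↑y)
    rw [hrel x y]
    push_cast [hact]
    rw [mul_assoc _ (↑(c x y) : G), show t ((x : G ⧸ A) * (y : G ⧸ A)) = t ↑(x * y) from rfl, hc_spec x y]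
    push_cast
    group
  refine ⟨MonoidHom.mk' s0 hmul, ?_⟩
  intro x
  have hs0x : (MonoidHom.mk' s0 hmul) x = ↑(a x) * t ↑x := rfl
  rw [hs0x, QuotientGroup.mk_mul, ht]
  have h1 : (QuotientGroup.mk ↑(a x) : G ⧸ A) = 1 := by
    rw [QuotientGroup.eq_one_iff]; exact (a x).2
  rw [h1, one_mul]

theorem stmt_13 {G : Type*} [Group G] (A : Subgroup G) [A.Normal]
    (hA : ∀ a b : A, a * b = b * a) [Finite (G ⧸ A)]
    (h : Function.Bijective (fun a : A => a ^ Nat.card (G ⧸ A))) :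
    (∀ H : Subgroup (G ⧸ A), ∃ s : H →* G,
      ∀ x : H, QuotientGroup.mk (s x) = (x : G ⧸ A)) ∧
    (∃ s : (G ⧸ A) →* G, (QuotientGroup.mk' A).comp s = MonoidHom.id (G ⧸ A)) := by
  have main := split_aux A hA h
  refine ⟨main, ?_⟩
  obtain ⟨s, hs⟩ := main ⊤
  refine ⟨s.comp Subgroup.topEquiv.symm.toMonoidHom, ?_⟩
  ext q
  simp only [MonoidHom.comp_apply, MonoidHom.id_apply, QuotientGroup.mk'_apply]
  exact hs _
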